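/- Let f be a polynomial in C[x_1,...,x_d], let α be a nonzero complex number, and let q and r be the quotient and remainder of polynomial division of f by (x_i - α), so that f = q·(x_i - α) + r with r not involving x_i. Then the Newton polytope of q is contained in Q_i(N(f)) and the Newton polytope of r is contained in R_i(N(f)). -/

import Mathlib

open Pointwise

/-- The `i`-th standard basis vector in `ℝ^d`. -/
def stdBasis (d : ℕ) (i : Fin d) : Fin d → ℝ := fun j => if j = i then 1 else 0

/-- The lattice points of a subset of `ℝ^d`. -/
def latticePoints {d : ℕ} (P : Set (Fin d → ℝ)) : Set (Fin d → ℝ) :=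
  {x ∈ P | ∀ j, ∃ n : ℤ, x j = (n : ℝ)}

/-- The quotient polytope `Q_i(P)`. -/
def polyQuot {d : ℕ} (i : Fin d) (P : Set (Fin d → ℝ)) : Set (Fin d → ℝ) :=
  convexHull ℝ {y | ∃ x ∈ latticePoints P, 0 < x i ∧
    (y = x - stdBasis d i ∨ y = x - (x i) • stdBasis d i)}

/-- The remainder polytope `R_i(P)`. -/
def polyRem {d : ℕ} (i : Fin d) (P : Set (Fin d → ℝ)) : Set (Fin d → ℝ) :=
  convexHull ℝ {y | ∃ x ∈ latticePoints P, y = x - (x i) • stdBasis d i}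

/-- `P` is a lattice polytope: the convex hull of finitely many integer points. -/
def IsLatticePolytope {d : ℕ} (P : Set (Fin d → ℝ)) : Prop :=
  ∃ V : Finset (Fin d → ℤ),
    P = convexHull ℝ ((fun v : Fin d → ℤ => fun j => ((v j : ℤ) : ℝ)) '' (V : Set (Fin d → ℤ)))

/-- The Newton polytope of a multivariate polynomial. -/
noncomputable def newtonPolytope {d : ℕ} (f : MvPolynomial (Fin d) ℂ) : Set (Fin d → ℝ) :=
  convexHull ℝ ((fun a : Fin d →₀ ℕ => fun j => ((a j : ℕ) : ℝ)) '' (f.support : Set (Fin d →₀ ℕ)))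

open MvPolynomial in
/-- Coefficient recursion along the `i`-th fiber. -/
private lemma newton_coeff_step {d : ℕ} (i : Fin d) (f q r : MvPolynomial (Fin d) ℂ) (α : ℂ)
    (hdiv : f = q * (MvPolynomial.X i - MvPolynomial.C α) + r)
    (hr : ∀ a ∈ r.support, a i = 0)
    (b : Fin d →₀ ℕ) (hb : b i = 0) (k : ℕ) :
    q.coeff (Finsupp.single i k + b) =
      f.coeff (Finsupp.single i (k+1) + b) + α * q.coeff (Finsupp.single i (k+1) + b) := by
  set m := Finsupp.single i (k+1) + b with hm
  have hmi : m i = k + 1 := by simp [hm, hb]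
  have hrm : r.coeff m = 0 := by
    by_contra h
    have := hr m (MvPolynomial.mem_support_iff.mpr h)
    omega
  have hsub : m - Finsupp.single i 1 = Finsupp.single i k + b := by
    ext l
    by_cases hl : l = i
    · subst hl; simp [hm, hb, Finsupp.single_apply]
    · have hil : i ≠ l := fun h => hl h.symm
      simp [hm, Finsupp.single_apply, hil]
  have h := congrArg (fun p => MvPolynomial.coeff m p) hdiv
  simp only [mul_sub, coeff_add, coeff_sub, coeff_mul_X', hrm] at h
  rw [if_pos (by simp [Finsupp.mem_support_iff, hmi]), hsub] at h
  have hC : (q * MvPolynomial.C α).coeff m = α * q.coeff m := by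
    rw [mul_comm, coeff_C_mul]
  rw [hC] at h
  rw [h]; ring

open MvPolynomial in
/-- If all `f`-coefficients above level `j` vanish on the fiber, so does `Q_j`. -/
private lemma newton_coeff_vanish {d : ℕ} (i : Fin d) (f q r : MvPolynomial (Fin d) ℂ) (α : ℂ)
    (hdiv : f = q * (MvPolynomial.X i - MvPolynomial.C α) + r)
    (hr : ∀ a ∈ r.support, a i = 0)
    (b : Fin d →₀ ℕ) (hb : b i = 0) (j : ℕ)
    (h0 : ∀ k, j < k → f.coeff (Finsupp.single i k + b) = 0) :
    q.coeff (Finsupp.single i j + b) = 0 := by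
  set N := q.support.sup (fun a => a i) with hN
  have hbig : ∀ m, N < m → q.coeff (Finsupp.single i m + b) = 0 := by
    intro m hm
    by_contra h
    have hmem : (Finsupp.single i m + b) ∈ q.support := MvPolynomial.mem_support_iff.mpr h
    have hle := Finset.le_sup (f := fun a => a i) hmem
    have hle' : m ≤ N := by simpa [hb] using hle
    omega
  have key : ∀ n, q.coeff (Finsupp.single i j + b) =
      α ^ n * q.coeff (Finsupp.single i (j + n) + b) := by
    intro n
    induction n with
    | zero => simp
    | succ n ih =>
      rw [ih, newton_coeff_step i f q r α hdiv hr b hb (j + n),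
        h0 (j + n + 1) (by omega)]
      have : j + n + 1 = j + (n + 1) := by omega
      rw [this]
      ring
  rw [key (N + 1), hbig (j + (N + 1)) (by omega), mul_zero]

/-- If `f = q·(x_i - α) + r` with `r` not involving `x_i` and `α ≠ 0`, then
`N(q) ⊆ Q_i(N(f))` and `N(r) ⊆ R_i(N(f))`. -/
theorem newton_polytope_of_division {d : ℕ} (i : Fin d) (f q r : MvPolynomial (Fin d) ℂ)
    (α : ℂ) (hα : α ≠ 0)
    (hdiv : f = q * (MvPolynomial.X i - MvPolynomial.C α) + r)
    (hr : ∀ a ∈ r.support, a i = 0) :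
    newtonPolytope q ⊆ polyQuot i (newtonPolytope f) ∧
      newtonPolytope r ⊆ polyRem i (newtonPolytope f) := by
  classical
  set E : (Fin d →₀ ℕ) → (Fin d → ℝ) := fun a => fun l => ((a l : ℕ) : ℝ) with hE
  -- lattice point of N(f) coming from the support of f
  have hlat : ∀ c ∈ f.support, E c ∈ latticePoints (newtonPolytope f) := by
    intro c hc
    refine ⟨subset_convexHull ℝ _ ⟨c, hc, rfl⟩, fun l => ⟨(c l : ℤ), by simp [hE]⟩⟩
  -- the key combinatorial fact: above any exponent of q there is an exponent of f
  have hexists : ∀ b : Fin d →₀ ℕ, b i = 0 → ∀ j : ℕ,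
      q.coeff (Finsupp.single i j + b) ≠ 0 →
      ∃ k, j < k ∧ (Finsupp.single i k + b) ∈ f.support := by
    intro b hb j hq0
    by_contra h
    push_neg at h
    refine hq0 (newton_coeff_vanish i f q r α hdiv hr b hb j ?_)
    intro k hk
    exact MvPolynomial.notMem_support_iff.mp (h k hk)
  constructor
  · -- quotient part
    rw [newtonPolytope, polyQuot]
    apply convexHull_min ?_ (convex_convexHull ℝ _)
    rintro _ ⟨a, ha, rfl⟩
    have ha' : a ∈ q.support := ha
    set b := a.erase i with hbdef
    have hb : b i = 0 := Finsupp.erase_same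
    have haeq : Finsupp.single i (a i) + b = a := Finsupp.single_add_erase i a
    have hq0 : q.coeff (Finsupp.single i (a i) + b) ≠ 0 := by
      rw [haeq]; exact MvPolynomial.mem_support_iff.mp ha'
    obtain ⟨k, hk, hFk⟩ := hexists b hb (a i) hq0
    set x := E (Finsupp.single i k + b) with hx
    have hxlat : x ∈ latticePoints (newtonPolytope f) := hlat _ hFk
    have hxi : x i = (k : ℝ) := by simp [hx, hE, hb]
    have hxl : ∀ l, l ≠ i → x l = (b l : ℝ) := by
      intro l hl; simp [hx, hE, Finsupp.single_apply, Ne.symm hl, hl]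
    set u := x - stdBasis d i with hu
    set v := x - (x i) • stdBasis d i with hv
    have hu0 : u ∈ {y | ∃ x ∈ latticePoints (newtonPolytope f), 0 < x i ∧
        (y = x - stdBasis d i ∨ y = x - (x i) • stdBasis d i)} :=
      ⟨x, hxlat, by rw [hxi]; exact_mod_cast Nat.pos_of_ne_zero (by omega), Or.inl rfl⟩
    have hv0 : v ∈ {y | ∃ x ∈ latticePoints (newtonPolytope f), 0 < x i ∧
        (y = x - stdBasis d i ∨ y = x - (x i) • stdBasis d i)} :=
      ⟨x, hxlat, by rw [hxi]; exact_mod_cast Nat.pos_of_ne_zero (by omega), Or.inr rfl⟩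
    -- E a lies on the segment from v to u
    have hseg : E a ∈ segment ℝ u v := by
      set t : ℝ := (a i : ℝ) / ((k : ℝ) - 1) with ht
      have hkj : (a i : ℝ) ≤ (k : ℝ) - 1 := by
        have : (a i : ℝ) + 1 ≤ (k : ℝ) := by exact_mod_cast hk
        linarith
    -- handle `k = 1` (then `a i = 0`, `t = 0`) and `k ≥ 2` together
      have htmul : t * ((k : ℝ) - 1) = (a i : ℝ) := by
        rcases eq_or_ne ((k : ℝ) - 1) 0 with h1 | h1
        · have hk1 : k = 1 := by
            have : (k : ℝ) = 1 := by linarith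
            exact_mod_cast this
          have hai : a i = 0 := by omega
          simp [ht, h1, hai]
        · rw [ht]; field_simp
      have hk1real : (1 : ℝ) ≤ (k : ℝ) := by
        exact_mod_cast Nat.one_le_iff_ne_zero.mpr (by omega)
      have ht0 : 0 ≤ t := div_nonneg (Nat.cast_nonneg _) (by linarith)
      have ht1 : t ≤ 1 := by
        rcases eq_or_ne ((k : ℝ) - 1) 0 with h1 | h1
        · rw [ht, h1]; simp
        · have hpos : 0 < (k : ℝ) - 1 := lt_of_le_of_ne (by linarith) (Ne.symm h1)
          rw [ht, div_le_one hpos]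
          exact hkj
      refine ⟨t, 1 - t, ht0, by linarith, by ring, ?_⟩
      funext l
      by_cases hl : l = i
      · subst hl
        have hEa : E a l = (a l : ℝ) := rfl
        simp only [Pi.add_apply, Pi.smul_apply, hu, hv, Pi.sub_apply, stdBasis, if_pos rfl,
          smul_eq_mul, hxi, hEa, eq_self_iff_true, if_true]
        rw [← htmul]; ring
      · simp only [Pi.add_apply, Pi.smul_apply, hu, hv, Pi.sub_apply, stdBasis, if_neg hl,
          smul_eq_mul, hxl l hl]
        have hEa : E a l = (b l : ℝ) := by
          simp [hE, hbdef, Finsupp.erase_ne hl]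
        rw [hEa]; ring
    have := (convex_convexHull ℝ _).segment_subset
      (subset_convexHull ℝ _ hu0) (subset_convexHull ℝ _ hv0) hseg
    exact this
  · -- remainder part
    rw [newtonPolytope, polyRem]
    apply convexHull_min ?_ (convex_convexHull ℝ _)
    rintro _ ⟨a, ha, rfl⟩
    have ha' : a ∈ r.support := ha
    have hai : a i = 0 := hr a ha'
    -- coefficient relation at a
    have hrel : r.coeff a = f.coeff a + α * q.coeff a := by
      have h := congrArg (fun p => MvPolynomial.coeff a p) hdiv
      simp only [mul_sub, MvPolynomial.coeff_add, MvPolynomial.coeff_sub,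
        MvPolynomial.coeff_mul_X'] at h
      rw [if_neg (by simp [Finsupp.mem_support_iff, hai])] at h
      have hC : (q * MvPolynomial.C α).coeff a = α * q.coeff a := by
        rw [mul_comm, MvPolynomial.coeff_C_mul]
      rw [hC] at h
      rw [h]; ring
    have hrne : r.coeff a ≠ 0 := MvPolynomial.mem_support_iff.mp ha'
    by_cases hf0 : f.coeff a = 0
    · -- then q.coeff a ≠ 0, get k > 0 with single i k + a in supp f
      have hq0 : q.coeff a ≠ 0 := by
        intro h; apply hrne; rw [hrel, hf0, h]; ring
      have hq0' : q.coeff (Finsupp.single i 0 + a) ≠ 0 := by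
        simpa using hq0
      obtain ⟨k, hk, hFk⟩ := hexists a hai 0 hq0'
      set x := E (Finsupp.single i k + a) with hx
      refine subset_convexHull ℝ _ ⟨x, hlat _ hFk, ?_⟩
      have hxi : x i = (k : ℝ) := by simp [hx, hE, hai]
      funext l
      by_cases hl : l = i
      · subst hl
        simp [hE, hx, Pi.smul_apply, stdBasis, hxi, hai]
      · simp only [Pi.sub_apply, Pi.smul_apply, stdBasis, if_neg hl, smul_eq_mul, mul_zero,
          sub_zero]
        simp [hE, hx, Finsupp.single_apply, Ne.symm hl]
    · -- a itself is an exponent of f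
      have hFa : a ∈ f.support := MvPolynomial.mem_support_iff.mpr hf0
      refine subset_convexHull ℝ _ ⟨E a, hlat _ hFa, ?_⟩
      have hxi : E a i = 0 := by simp [hE, hai]
      rw [hxi]
      simp
      rfl
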